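/- If vectors φ_1,...,φ_n in F^d (F = R or C, n ≥ d) are nonzero and have equal norms, then their coherence max_{j≠j'} |⟨φ_j,φ_{j'}⟩|/(‖φ_j‖‖φ_{j'}‖) is at least sqrt((n-d)/(d(n-1))). -/

import Mathlib

open Finset

/-- **Welch bound.** If nonzero equal-norm vectors `φ 1, …, φ n` in `𝕜^d` (`𝕜 = ℝ` or `ℂ`,
`n ≥ d`), then their coherence, the supremum over pairs `j ≠ j'` of
`|⟨φ j, φ j'⟩| / (‖φ j‖ ‖φ j'‖)`, is at least `√((n − d)/(d(n − 1)))`. -/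
theorem welch_bound {𝕜 : Type*} [RCLike 𝕜] (d n : ℕ) (hd : 0 < d) (hdn : d ≤ n)
    (φ : Fin n → Fin d → 𝕜)
    (hnz : ∀ j, φ j ≠ 0)
    (β : ℝ) (hnorm : ∀ j, ∑ i, ‖φ j i‖ ^ 2 = β) :
    Real.sqrt (((n : ℝ) - d) / (d * ((n : ℝ) - 1))) ≤
      sSup {c : ℝ | ∃ j j' : Fin n, j ≠ j' ∧
        c = ‖∑ i, (starRingEnd 𝕜) (φ j i) * φ j' i‖ /
          (Real.sqrt (∑ i, ‖φ j i‖ ^ 2) * Real.sqrt (∑ i, ‖φ j' i‖ ^ 2))} := by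
  classical
  have hn1 : 1 ≤ n := le_trans hd hdn
  by_cases hn2 : 2 ≤ n
  case neg =>
    -- n = 1 : the set is empty and the bound is 0
    have hn : n = 1 := by omega
    have hset : {c : ℝ | ∃ j j' : Fin n, j ≠ j' ∧
        c = ‖∑ i, (starRingEnd 𝕜) (φ j i) * φ j' i‖ /
          (Real.sqrt (∑ i, ‖φ j i‖ ^ 2) * Real.sqrt (∑ i, ‖φ j' i‖ ^ 2))} = ∅ := by
      ext c
      simp only [Set.mem_setOf_eq, Set.mem_empty_iff_false, iff_false, not_exists]
      intro j j' ⟨hne, _⟩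
      exact hne (by subst hn; exact Subsingleton.elim j j')
    rw [hset, Real.sSup_empty]
    have : ((n : ℝ) - d) / (d * ((n : ℝ) - 1)) = 0 := by
      have hdd : d = 1 := by omega
      rw [hn, hdd]; norm_num
    rw [this, Real.sqrt_zero]
  case pos =>
  -- β > 0
  have hβ0 : 0 ≤ β := by
    rw [← hnorm ⟨0, hn1⟩]; positivity
  have hβpos : 0 < β := by
    rcases (lt_or_eq_of_le hβ0) with h | h
    · exact h
    · exfalso
      apply hnz ⟨0, hn1⟩
      funext i
      have hsum := hnorm ⟨0, hn1⟩
      rw [← h] at hsum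
      have hz : ‖φ ⟨0, hn1⟩ i‖ ^ 2 = 0 := by
        have := Finset.sum_eq_zero_iff_of_nonneg (fun i _ => sq_nonneg ‖φ ⟨0, hn1⟩ i‖) |>.mp hsum i (mem_univ i)
        exact this
      simpa using pow_eq_zero_iff (n := 2) (by norm_num) |>.mp hz
  -- Euclidean space setup
  set x : Fin n → EuclideanSpace 𝕜 (Fin d) := fun j => WithLp.toLp 2 (φ j) with hx
  have hip : ∀ j j', (inner 𝕜 (x j) (x j') : 𝕜) = ∑ i, (starRingEnd 𝕜) (φ j i) * φ j' i := by
    intro j j'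
    simp [PiLp.inner_apply, RCLike.inner_apply, hx, mul_comm]
  have hxnorm : ∀ j, ‖x j‖ = Real.sqrt β := by
    intro j
    rw [EuclideanSpace.norm_eq]
    congr 1
    exact hnorm j
  -- the Gram-type matrix on coordinates
  set S : Fin d → Fin d → 𝕜 := fun i k => ∑ j, (starRingEnd 𝕜) (φ j i) * φ j k with hS
  have swap4 : ∀ (g : Fin n → Fin n → Fin d → Fin d → 𝕜),
      ∑ j, ∑ j', ∑ i, ∑ k, g j j' i k = ∑ i, ∑ k, ∑ j, ∑ j', g j j' i k := by
    intro g
    calc ∑ j, ∑ j', ∑ i, ∑ k, g j j' i k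
        = ∑ j, ∑ i, ∑ j', ∑ k, g j j' i k :=
          Finset.sum_congr rfl fun j _ => Finset.sum_comm
      _ = ∑ i, ∑ j, ∑ j', ∑ k, g j j' i k := Finset.sum_comm
      _ = ∑ i, ∑ j, ∑ k, ∑ j', g j j' i k :=
          Finset.sum_congr rfl fun i _ => Finset.sum_congr rfl fun j _ => Finset.sum_comm
      _ = ∑ i, ∑ k, ∑ j, ∑ j', g j j' i k :=
          Finset.sum_congr rfl fun i _ => Finset.sum_comm
  have key : ∑ j, ∑ j', ((inner 𝕜 (x j) (x j') : 𝕜) * (starRingEnd 𝕜) (inner 𝕜 (x j) (x j') : 𝕜))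
      = ∑ i, ∑ k, (S i k * (starRingEnd 𝕜) (S i k)) := by
    simp only [hip, hS, map_sum, map_mul, RCLike.conj_conj, Finset.sum_mul_sum]
    rw [swap4]
    refine Finset.sum_congr rfl fun i _ => Finset.sum_congr rfl fun k _ =>
      Finset.sum_congr rfl fun j _ => Finset.sum_congr rfl fun j' _ => by ring
  have hT : (∑ j, ∑ j', ‖(inner 𝕜 (x j) (x j') : 𝕜)‖ ^ 2) = ∑ i, ∑ k, ‖S i k‖ ^ 2 := by
    have h := key
    simp only [RCLike.mul_conj] at h
    exact_mod_cast h
  -- trace computation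
  have hdiagS : ∀ i, RCLike.re (S i i) = ∑ j, ‖φ j i‖ ^ 2 := by
    intro i
    rw [hS, map_sum]
    refine Finset.sum_congr rfl fun j _ => ?_
    rw [RCLike.conj_mul]
    exact_mod_cast rfl
  have htrace : ∑ i, RCLike.re (S i i) = n * β := by
    simp only [hdiagS]
    rw [Finset.sum_comm]
    simp [hnorm]
  -- Cauchy–Schwarz on the trace
  have hCS : ((n : ℝ) * β) ^ 2 ≤ (d : ℝ) * ∑ i, ∑ k, ‖S i k‖ ^ 2 := by
    calc ((n : ℝ) * β) ^ 2 = (∑ i, RCLike.re (S i i)) ^ 2 := by rw [htrace]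
      _ ≤ (Finset.univ.card : ℝ) * ∑ i, (RCLike.re (S i i)) ^ 2 := by
          exact_mod_cast sq_sum_le_card_mul_sum_sq (s := (Finset.univ : Finset (Fin d)))
            (f := fun i => RCLike.re (S i i))
      _ = (d : ℝ) * ∑ i, (RCLike.re (S i i)) ^ 2 := by simp
      _ ≤ (d : ℝ) * ∑ i, ‖S i i‖ ^ 2 := by
          have h : ∀ i : Fin d, (RCLike.re (S i i)) ^ 2 ≤ ‖S i i‖ ^ 2 := by
            intro i
            rw [← sq_abs (RCLike.re (S i i))]
            exact pow_le_pow_left₀ (abs_nonneg _) (RCLike.abs_re_le_norm _) 2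
          exact mul_le_mul_of_nonneg_left (Finset.sum_le_sum fun i _ => h i) (by positivity)
      _ ≤ (d : ℝ) * ∑ i, ∑ k, ‖S i k‖ ^ 2 := by
          refine mul_le_mul_of_nonneg_left (Finset.sum_le_sum fun i _ => ?_) (by positivity)
          exact Finset.single_le_sum (f := fun k => ‖S i k‖ ^ 2) (fun k _ => sq_nonneg _) (mem_univ i)
  -- diagonal terms of the Gram matrix
  have hdiagT : ∀ j, ‖(inner 𝕜 (x j) (x j) : 𝕜)‖ ^ 2 = β ^ 2 := by
    intro j
    rw [inner_self_eq_norm_sq_to_K]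
    rw [norm_pow, RCLike.norm_ofReal, abs_norm, ← pow_mul, pow_mul, hxnorm,
      Real.sq_sqrt hβ0]
  -- split the double sum
  set f : Fin n × Fin n → ℝ := fun p => ‖(inner 𝕜 (x p.1) (x p.2) : 𝕜)‖ ^ 2 with hf
  have hsplit : ∑ p ∈ (Finset.univ : Finset (Fin n)).offDiag, f p
      = (∑ j, ∑ j', ‖(inner 𝕜 (x j) (x j') : 𝕜)‖ ^ 2) - n * β ^ 2 := by
    have h1 : ∑ j, ∑ j', ‖(inner 𝕜 (x j) (x j') : 𝕜)‖ ^ 2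
        = ∑ p ∈ (Finset.univ : Finset (Fin n)) ×ˢ Finset.univ, f p := by
      rw [Finset.sum_product]
    have h2 : (Finset.univ : Finset (Fin n)) ×ˢ Finset.univ
        = (Finset.univ : Finset (Fin n)).diag ∪ (Finset.univ : Finset (Fin n)).offDiag :=
      (Finset.diag_union_offDiag _).symm
    rw [h1, h2, Finset.sum_union (Finset.disjoint_diag_offDiag _), Finset.sum_diag]
    have h3 : ∑ j, f (j, j) = (n : ℝ) * β ^ 2 := by
      simp only [hf, hdiagT]
      simp
    rw [h3]; ring
  -- average over off-diagonal
  have hcard : (((Finset.univ : Finset (Fin n)).offDiag.card : ℝ)) = n * n - n := by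
    rw [Finset.offDiag_card]
    simp only [Finset.card_univ, Fintype.card_fin]
    have : n ≤ n * n := Nat.le_mul_of_pos_left n (by omega)
    push_cast [Nat.cast_sub this]
    ring
  set c : ℝ := β ^ 2 * (((n : ℝ) - d) / (d * ((n : ℝ) - 1))) with hc
  have hne : ((Finset.univ : Finset (Fin n)).offDiag).Nonempty := by
    refine ⟨(⟨0, by omega⟩, ⟨1, by omega⟩), ?_⟩
    rw [Finset.mem_offDiag]
    exact ⟨mem_univ _, mem_univ _, by simp [Fin.ext_iff]⟩
  have havg : ∑ p ∈ (Finset.univ : Finset (Fin n)).offDiag, c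
      ≤ ∑ p ∈ (Finset.univ : Finset (Fin n)).offDiag, f p := by
    rw [Finset.sum_const, nsmul_eq_mul, hcard, hsplit]
    have hTlb : (n : ℝ) * n * β ^ 2 / d ≤ ∑ j, ∑ j', ‖(inner 𝕜 (x j) (x j') : 𝕜)‖ ^ 2 := by
      rw [hT, div_le_iff₀ (by exact_mod_cast hd)]
      calc (n:ℝ) * n * β^2 = ((n:ℝ) * β)^2 := by ring
        _ ≤ (d : ℝ) * ∑ i, ∑ k, ‖S i k‖ ^ 2 := hCS
        _ = (∑ i, ∑ k, ‖S i k‖ ^ 2) * d := by ring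
    have hdpos : (0:ℝ) < d := by exact_mod_cast hd
    have hn1' : (0:ℝ) < (n:ℝ) - 1 := by
      have : (2:ℝ) ≤ n := by exact_mod_cast hn2
      linarith
    have hceq : ((n:ℝ) * n - n) * c = (n : ℝ) * n * β ^ 2 / d - n * β ^ 2 := by
      rw [hc]
      field_simp
    linarith
  obtain ⟨p, hp, hcp⟩ := Finset.exists_le_of_sum_le hne havg
  rw [Finset.mem_offDiag] at hp
  obtain ⟨-, -, hpne⟩ := hp
  -- the chosen off-diagonal pair witnesses the bound
  set c₀ : ℝ := ‖∑ i, (starRingEnd 𝕜) (φ p.1 i) * φ p.2 i‖ /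
      (Real.sqrt (∑ i, ‖φ p.1 i‖ ^ 2) * Real.sqrt (∑ i, ‖φ p.2 i‖ ^ 2)) with hc₀
  have hc₀mem : c₀ ∈ {c : ℝ | ∃ j j' : Fin n, j ≠ j' ∧
      c = ‖∑ i, (starRingEnd 𝕜) (φ j i) * φ j' i‖ /
        (Real.sqrt (∑ i, ‖φ j i‖ ^ 2) * Real.sqrt (∑ i, ‖φ j' i‖ ^ 2))} :=
    ⟨p.1, p.2, hpne, rfl⟩
  have hbdd : BddAbove {c : ℝ | ∃ j j' : Fin n, j ≠ j' ∧
      c = ‖∑ i, (starRingEnd 𝕜) (φ j i) * φ j' i‖ /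
        (Real.sqrt (∑ i, ‖φ j i‖ ^ 2) * Real.sqrt (∑ i, ‖φ j' i‖ ^ 2))} := by
    refine ⟨1, ?_⟩
    rintro r ⟨j, j', -, rfl⟩
    rw [hnorm, hnorm, ← hip, Real.mul_self_sqrt hβ0]
    rw [div_le_one hβpos]
    calc ‖(inner 𝕜 (x j) (x j') : 𝕜)‖ ≤ ‖x j‖ * ‖x j'‖ := norm_inner_le_norm _ _
      _ = β := by rw [hxnorm, hxnorm, Real.mul_self_sqrt hβ0]
  refine le_trans ?_ (le_csSup hbdd hc₀mem)
  -- finally : √((n-d)/(d(n-1))) ≤ c₀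
  have hrnn : 0 ≤ ((n : ℝ) - d) / (d * ((n : ℝ) - 1)) := by
    have h1 : (0:ℝ) ≤ (n:ℝ) - d := by
      have : (d:ℝ) ≤ n := by exact_mod_cast hdn
      linarith
    have h2 : (0:ℝ) < (d:ℝ) * ((n:ℝ) - 1) := by
      have hdpos : (0:ℝ) < d := by exact_mod_cast hd
      have : (2:ℝ) ≤ n := by exact_mod_cast hn2
      nlinarith
    positivity
  rw [hc₀, hnorm, hnorm, Real.mul_self_sqrt hβ0]
  rw [le_div_iff₀ hβpos]
  have h1 : Real.sqrt (((n : ℝ) - d) / (d * ((n : ℝ) - 1))) * β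
      = Real.sqrt (c) := by
    rw [hc, Real.sqrt_mul (sq_nonneg β), Real.sqrt_sq hβ0]
    ring
  rw [h1]
  calc Real.sqrt c ≤ Real.sqrt (f p) := Real.sqrt_le_sqrt hcp
    _ = ‖(inner 𝕜 (x p.1) (x p.2) : 𝕜)‖ := by
        rw [hf]; exact Real.sqrt_sq (norm_nonneg _)
    _ = ‖∑ i, (starRingEnd 𝕜) (φ p.1 i) * φ p.2 i‖ := by rw [hip]
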